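/- Let R be a unique factorization domain and M the R-module presented by two generators α, β and the single relation p₁α + p₂β = 0, with p₁, p₂ ∈ R not both zero. Then M is torsion-free if and only if p₁ and p₂ are relatively prime. -/

import Mathlib

/-- Over a UFD `R`, the module `R²/R·(p₁,p₂)` (with `p₁, p₂` not both zero) is torsion-free
if and only if `p₁` and `p₂` are relatively prime. -/
theorem stmt2 {R : Type*} [CommRing R] [IsDomain R] [UniqueFactorizationMonoid R]
    (p₁ p₂ : R) (hp : ¬ (p₁ = 0 ∧ p₂ = 0)) :
    (∀ (r : R) (m : (Fin 2 → R) ⧸ Submodule.span R {![p₁, p₂]}),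
        r • m = 0 → r = 0 ∨ m = 0) ↔ IsRelPrime p₁ p₂ := by
  constructor
  · intro h d hd1 hd2
    obtain ⟨a, ha⟩ := hd1
    obtain ⟨b, hb⟩ := hd2
    have hd0 : d ≠ 0 := by
      rintro rfl
      exact hp ⟨by simp [ha], by simp [hb]⟩
    have hmem : d • ![a, b] ∈ Submodule.span R {![p₁, p₂]} := by
      have : d • ![a, b] = ![p₁, p₂] := by
        funext i
        fin_cases i <;> simp [ha, hb]
      rw [this]
      exact Submodule.mem_span_singleton_self _
    have := h d (Submodule.Quotient.mk ![a, b]) (by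
      rw [← Submodule.Quotient.mk_smul, Submodule.Quotient.mk_eq_zero]
      exact hmem)
    rcases this with h0 | h0
    · exact absurd h0 hd0
    · rw [Submodule.Quotient.mk_eq_zero, Submodule.mem_span_singleton] at h0
      obtain ⟨c, hc⟩ := h0
      have hca : a = c * p₁ := by
        have := congrFun hc 0; simpa using this.symm
      have hcb : b = c * p₂ := by
        have := congrFun hc 1; simpa using this.symm
      rcases (not_and_or.mp hp) with h1 | h1
      · have ha0 : a ≠ 0 := fun h0 => h1 (by simp [ha, h0])
        rw [ha] at hca
        have h2 : a * (c * d) = a * 1 := by linear_combination -hca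
        have h3 := mul_left_cancel₀ ha0 h2
        exact IsUnit.of_mul_eq_one (a := d) c (by linear_combination h3)
      · have hb0 : b ≠ 0 := fun h0 => h1 (by simp [hb, h0])
        rw [hb] at hcb
        have h2 : b * (c * d) = b * 1 := by linear_combination -hcb
        have h3 := mul_left_cancel₀ hb0 h2
        exact IsUnit.of_mul_eq_one (a := d) c (by linear_combination h3)
  · intro hrel r m hrm
    by_cases hr : r = 0
    · exact Or.inl hr
    right
    obtain ⟨x, rfl⟩ := Submodule.Quotient.mk_surjective _ m
    rw [← Submodule.Quotient.mk_smul, Submodule.Quotient.mk_eq_zero,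
      Submodule.mem_span_singleton] at hrm
    obtain ⟨c, hc⟩ := hrm
    obtain ⟨a', b', c', hab, hc'a, hc'b⟩ :=
      UniqueFactorizationMonoid.exists_reduced_factors r hr c
    have hc'0 : c' ≠ 0 := fun h0 => hr (by rw [← hc'a, h0, zero_mul])
    have key : ∀ i, a' * x i = b' * ![p₁, p₂] i := by
      intro i
      apply mul_left_cancel₀ hc'0
      have := congrFun hc i
      simp only [Pi.smul_apply, smul_eq_mul] at this
      rw [← mul_assoc, ← mul_assoc, hc'a, hc'b]
      exact this.symm
    have hdvd : ∀ i, a' ∣ ![p₁, p₂] i := by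
      intro i
      exact hab.dvd_of_dvd_mul_left ⟨x i, (key i).symm⟩
    have hu : IsUnit a' := hrel (by simpa using hdvd 0) (by simpa using hdvd 1)
    obtain ⟨u, rfl⟩ := hu
    rw [Submodule.Quotient.mk_eq_zero, Submodule.mem_span_singleton]
    refine ⟨(↑u⁻¹ : R) * b', ?_⟩
    funext i
    have := key i
    simp only [Pi.smul_apply, smul_eq_mul]
    calc (↑u⁻¹ : R) * b' * ![p₁, p₂] i = (↑u⁻¹ : R) * (↑u * x i) := by
          rw [mul_assoc, ← this]
      _ = x i := by rw [← mul_assoc, Units.inv_mul, one_mul]
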